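/- Let d ∈ ℕ and let k ≥ 3 be an integer, ℓ := ⌊d/2⌋ + k + 1, and let Ψ_{ℓ,k}(x) := ψ_{ℓ,k}(‖x‖₂) be the radial Wendland function on ℝ^d. Then for all 1 ≤ i, j ≤ d with i ≠ j, ∂_i ∂_j Δ² Ψ_{ℓ,k}(x − y)|_{x = y} = 0; equivalently, ∂_i ∂_j Δ² Ψ_{ℓ,k}(0) = 0, where Δ² is the bi-Laplacian. -/

import Mathlib

open MeasureTheory

/-- Partial derivative `∂_i f` on `ℝ^d`. -/
noncomputable def pd {d : ℕ} (i : Fin d) (f : EuclideanSpace ℝ (Fin d) → ℝ) :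
    EuclideanSpace ℝ (Fin d) → ℝ :=
  fun x => fderiv ℝ f x (EuclideanSpace.single i 1)

/-- The Laplacian `Δf = Σ_i ∂_i ∂_i f` on `ℝ^d`. -/
noncomputable def lapl {d : ℕ} (f : EuclideanSpace ℝ (Fin d) → ℝ) :
    EuclideanSpace ℝ (Fin d) → ℝ :=
  fun x => ∑ i : Fin d, pd i (pd i f) x

/-- The Wendland function
`ψ_{ℓ,k}(r) = (1/(Γ(k) 2^{k-1})) ∫_r^1 s (1-s)^ℓ (s²-r²)^{k-1} ds` for `0 ≤ r ≤ 1`,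
and `0` for `r > 1`. -/
noncomputable def wend (ℓ k : ℕ) (r : ℝ) : ℝ :=
  if r ≤ 1 then
    (1 / (Real.Gamma k * 2 ^ (k - 1))) *
      ∫ s in r..1, s * (1 - s) ^ ℓ * (s ^ 2 - r ^ 2) ^ (k - 1)
  else 0

/-! Auxiliary: reflection symmetry. The proof of `stmt8` is a pure symmetry argument:
reflecting coordinate `j` about the center `y` leaves the radial function (hence its
iterated Laplacians) invariant, flips the sign of `pd j`, and preserves `pd i` for `i ≠ j`;
evaluating at the fixed point `y` forces the mixed partial to equal its own negative. -/

/-- The linear isometry flipping coordinate `j`. -/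
noncomputable def Rli {d : ℕ} (j : Fin d) :
    EuclideanSpace ℝ (Fin d) ≃ₗᵢ[ℝ] EuclideanSpace ℝ (Fin d) :=
  LinearIsometryEquiv.piLpCongrRight 2
    (fun m => if m = j then LinearIsometryEquiv.neg ℝ (E := ℝ) else LinearIsometryEquiv.refl ℝ ℝ)

/-- The same map as a continuous linear equivalence. -/
noncomputable def Rr {d : ℕ} (j : Fin d) :
    EuclideanSpace ℝ (Fin d) ≃L[ℝ] EuclideanSpace ℝ (Fin d) :=
  (Rli j).toContinuousLinearEquiv

lemma Rr_eq {d : ℕ} (j : Fin d) (x : EuclideanSpace ℝ (Fin d)) : Rr j x = Rli j x := rfl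

lemma Rr_apply {d : ℕ} (j : Fin d) (x : EuclideanSpace ℝ (Fin d)) (m : Fin d) :
    Rr j x m = if m = j then -(x m) else x m := by
  show (Rli j x) m = _
  simp [Rli, LinearIsometryEquiv.piLpCongrRight_apply]
  split <;> simp

lemma Rr_single_self {d : ℕ} (j : Fin d) :
    Rr j (EuclideanSpace.single j 1) = -(EuclideanSpace.single j 1) := by
  ext m
  rw [Rr_apply]
  by_cases h : m = j <;> simp [h, EuclideanSpace.single_apply]

lemma Rr_single_ne {d : ℕ} (j m : Fin d) (h : m ≠ j) :
    Rr j (EuclideanSpace.single m 1) = EuclideanSpace.single m 1 := by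
  ext n
  rw [Rr_apply]
  rcases eq_or_ne n j with hn | hn
  · subst hn
    rw [if_pos rfl, EuclideanSpace.single_apply, if_neg (Ne.symm h), neg_zero]
  · rw [if_neg hn]

/-- Reflection about `y` in coordinate `j`. -/
noncomputable def refY {d : ℕ} (j : Fin d) (y : EuclideanSpace ℝ (Fin d)) :
    EuclideanSpace ℝ (Fin d) → EuclideanSpace ℝ (Fin d) :=
  fun x => Rr j (x - y) + y

lemma refY_fix {d : ℕ} (j : Fin d) (y : EuclideanSpace ℝ (Fin d)) : refY j y y = y := by
  simp [refY]

lemma refY_norm {d : ℕ} (j : Fin d) (y x : EuclideanSpace ℝ (Fin d)) :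
    ‖refY j y x - y‖ = ‖x - y‖ := by
  rw [refY, add_sub_cancel_right, Rr_eq]
  exact (Rli j).norm_map _

/-- Unconditional shift lemma for `fderiv`. -/
lemma fderiv_comp_add {E : Type*} [NormedAddCommGroup E] [NormedSpace ℝ E]
    (f : E → ℝ) (c x : E) :
    fderiv ℝ (fun z => f (z + c)) x = fderiv ℝ f (x + c) := by
  by_cases h : DifferentiableAt ℝ f (x + c)
  · have hid : HasFDerivAt (fun z : E => z + c) (ContinuousLinearMap.id ℝ E) x :=
      (hasFDerivAt_id x).add_const c
    have := (h.hasFDerivAt.comp x hid)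
    simpa [Function.comp_def] using this.fderiv
  · have h2 : ¬ DifferentiableAt ℝ (fun z => f (z + c)) x := by
      intro hcon
      have hid : DifferentiableAt ℝ (fun w : E => w - c) (x + c) :=
        (differentiable_id.sub_const c).differentiableAt
      have h3 : DifferentiableAt ℝ ((fun z => f (z + c)) ∘ (fun w : E => w - c)) (x + c) :=
        DifferentiableAt.comp (x + c) (by rwa [add_sub_cancel_right]) hid
      have h4 : DifferentiableAt ℝ f (x + c) := by
        simpa [Function.comp_def, sub_add_cancel] using h3
      exact h h4
    rw [fderiv_zero_of_not_differentiableAt h, fderiv_zero_of_not_differentiableAt h2]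

/-- Unconditional chain rule through the affine reflection. -/
lemma fderiv_comp_refY {d : ℕ} (j : Fin d) (y : EuclideanSpace ℝ (Fin d))
    (f : EuclideanSpace ℝ (Fin d) → ℝ) (x : EuclideanSpace ℝ (Fin d)) :
    fderiv ℝ (fun z => f (refY j y z)) x
      = (fderiv ℝ f (refY j y x)).comp (Rr j : EuclideanSpace ℝ (Fin d) →L[ℝ] _) := by
  have e1 : (fun z => f (refY j y z))
      = (fun z => ((fun w => f (w + y)) ∘ (Rr j)) (z + (-y))) := by
    funext z; simp [refY, sub_eq_add_neg]
  rw [e1, fderiv_comp_add, (Rr j).comp_right_fderiv, fderiv_comp_add]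
  have : Rr j (x + -y) + y = refY j y x := by simp [refY, sub_eq_add_neg]
  rw [this]

lemma pd_comp_refY_self {d : ℕ} (j : Fin d) (y : EuclideanSpace ℝ (Fin d))
    (f : EuclideanSpace ℝ (Fin d) → ℝ) (x : EuclideanSpace ℝ (Fin d)) :
    pd j (fun z => f (refY j y z)) x = -(pd j f (refY j y x)) := by
  rw [pd, fderiv_comp_refY, ContinuousLinearMap.comp_apply]
  rw [show ((Rr j : EuclideanSpace ℝ (Fin d) →L[ℝ] _) (EuclideanSpace.single j 1))
      = Rr j (EuclideanSpace.single j 1) from rfl, Rr_single_self, map_neg]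
  rfl

lemma pd_comp_refY_ne {d : ℕ} (j m : Fin d) (hm : m ≠ j) (y : EuclideanSpace ℝ (Fin d))
    (f : EuclideanSpace ℝ (Fin d) → ℝ) (x : EuclideanSpace ℝ (Fin d)) :
    pd m (fun z => f (refY j y z)) x = pd m f (refY j y x) := by
  rw [pd, fderiv_comp_refY, ContinuousLinearMap.comp_apply]
  rw [show ((Rr j : EuclideanSpace ℝ (Fin d) →L[ℝ] _) (EuclideanSpace.single m 1))
      = Rr j (EuclideanSpace.single m 1) from rfl, Rr_single_ne j m hm]
  rfl

lemma pd_neg {d : ℕ} (m : Fin d) (f : EuclideanSpace ℝ (Fin d) → ℝ)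
    (x : EuclideanSpace ℝ (Fin d)) :
    pd m (fun z => -(f z)) x = -(pd m f x) := by
  rw [pd, fderiv_fun_neg]; rfl

/-- The Laplacian commutes with the reflection. -/
lemma lapl_comp_refY {d : ℕ} (j : Fin d) (y : EuclideanSpace ℝ (Fin d))
    (f : EuclideanSpace ℝ (Fin d) → ℝ) (x : EuclideanSpace ℝ (Fin d)) :
    lapl (fun z => f (refY j y z)) x = lapl f (refY j y x) := by
  rw [lapl, lapl]
  refine Finset.sum_congr rfl fun m _ => ?_
  rcases eq_or_ne m j with hm | hm
  · subst hm
    have e1 : pd m (fun z => f (refY m y z)) = fun z => -(pd m f (refY m y z)) :=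
      funext fun z => pd_comp_refY_self m y f z
    rw [e1]
    have e2 : pd m (fun z => -(pd m f (refY m y z))) x
        = -(pd m (fun z => pd m f (refY m y z)) x) := pd_neg m _ x
    rw [e2, pd_comp_refY_self m y (pd m f) x, neg_neg]
  · have e1 : pd m (fun z => f (refY j y z)) = fun z => pd m f (refY j y z) :=
      funext fun z => pd_comp_refY_ne j m hm y f z
    rw [e1, pd_comp_refY_ne j m hm y (pd m f) x]

/-- Main symmetry lemma: the mixed partial of any iterated Laplacian of a radial
function vanishes at the center. -/
lemma key_sym {d : ℕ} (ℓ k : ℕ) (i j : Fin d) (hij : i ≠ j)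
    (y : EuclideanSpace ℝ (Fin d)) :
    pd i (pd j (lapl (lapl
      (fun x : EuclideanSpace ℝ (Fin d) => wend ℓ k ‖x - y‖)))) y = 0 := by
  set Ψ : EuclideanSpace ℝ (Fin d) → ℝ := fun x => wend ℓ k ‖x - y‖ with hΨdef
  have hΨ : (fun z => Ψ (refY j y z)) = Ψ := by
    funext z
    simp only [hΨdef]
    rw [refY_norm]
  have hG : (fun z => lapl Ψ (refY j y z)) = lapl Ψ := by
    funext z
    rw [← lapl_comp_refY j y Ψ z, hΨ]
  have hF : (fun z => lapl (lapl Ψ) (refY j y z)) = lapl (lapl Ψ) := by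
    funext z
    rw [← lapl_comp_refY j y (lapl Ψ) z, hG]
  set F : EuclideanSpace ℝ (Fin d) → ℝ := lapl (lapl Ψ) with hFdef
  have hpdj : pd j F = fun z => -(pd j F (refY j y z)) := by
    funext z
    have h1 := pd_comp_refY_self j y F z
    rw [hF] at h1
    exact h1
  have hfin : pd i (pd j F) y = -(pd i (pd j F) y) := by
    conv_lhs => rw [hpdj]
    rw [show pd i (fun z => -(pd j F (refY j y z))) y
        = -(pd i (fun z => pd j F (refY j y z)) y) from pd_neg i _ y,
      pd_comp_refY_ne j i hij y (pd j F) y, refY_fix]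
  linarith

/-- for the radial Wendland function `Ψ_{ℓ,k}(x) = ψ_{ℓ,k}(‖x‖₂)` on `ℝ^d` with
`k ≥ 3` and `ℓ = ⌊d/2⌋ + k + 1`, the mixed second partials of the bi-Laplacian vanish at
coincident points: `∂_i ∂_j Δ² Ψ_{ℓ,k}(x-y)|_{x=y} = 0` for `i ≠ j`; equivalently
`∂_i ∂_j Δ² Ψ_{ℓ,k}(0) = 0`. -/
theorem stmt8
    (d k : ℕ) (hd : 0 < d) (hk : 3 ≤ k)
    (i j : Fin d) (hij : i ≠ j) :
    (∀ y : EuclideanSpace ℝ (Fin d),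
      pd i (pd j (lapl (lapl
        (fun x : EuclideanSpace ℝ (Fin d) => wend (d / 2 + k + 1) k ‖x - y‖)))) y = 0) ∧
    pd i (pd j (lapl (lapl
      (fun x : EuclideanSpace ℝ (Fin d) => wend (d / 2 + k + 1) k ‖x‖)))) 0 = 0 := by
  constructor
  · exact fun y => key_sym _ _ i j hij y
  · have h0 := key_sym (d / 2 + k + 1) k i j hij 0
    simpa only [sub_zero] using h0
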